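/- Let X and Y be real Hilbert spaces and let a : X×Y → ℝ∪{+∞} be such that for every y ∈ Y the function a(·,y) is proper Φ_lsc-convex on X, and for every x ∈ X the function a(x,·) is concave on Y. Set β := inf_{x∈X} sup_{y∈Y} a(x,y) and assume β < +∞. If there exist y₁, y₂ ∈ Y and x̄ ∈ dom(a(·,y₁)) ∩ dom(a(·,y₂)) with a(x̄,y₁) ≥ β and a(x̄,y₂) ≥ β such that (0,0) ∈ co(∂_lsc a(·,y₁)(x̄) ∪ ∂_lsc a(·,y₂)(x̄)), then sup_{y∈Y} inf_{x∈X} a(x,y) = inf_{x∈X} sup_{y∈Y} a(x,y). -/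

import Mathlib

open scoped RealInnerProductSpace

noncomputable section

/-- The class `Φ_lsc` of continuous functions `x ↦ -a‖x‖² + ⟪v,x⟫ + c` with `a ≥ 0`. -/
def PhiLsc (X : Type*) [NormedAddCommGroup X] [InnerProductSpace ℝ X] : Set (X → ℝ) :=
  {φ | ∃ a : ℝ, ∃ v : X, ∃ c : ℝ, 0 ≤ a ∧ ∀ x, φ x = -a * ‖x‖ ^ 2 + ⟪v, x⟫ + c}

/-- The support set `supp(f) = {φ ∈ Φ_lsc : φ ≤ f}` of `f : X → ℝ∪{+∞}`. -/
def PhiSupp {X : Type*} [NormedAddCommGroup X] [InnerProductSpace ℝ X] (f : X → EReal) :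
    Set (X → ℝ) :=
  {φ | φ ∈ PhiLsc X ∧ ∀ x, (φ x : EReal) ≤ f x}

/-- The effective domain of `f`. -/
def PhiDom {X : Type*} (f : X → EReal) : Set X := {x | f x < ⊤}

/-- `f` is `Φ_lsc`-convex: it is the pointwise supremum of its support set. -/
def PhiConvexOn {X : Type*} [NormedAddCommGroup X] [InnerProductSpace ℝ X] (f : X → EReal) :
    Prop :=
  ∀ x, f x = ⨆ φ ∈ PhiSupp f, (φ x : EReal)

/-- The set of `ε`-`Φ_lsc`-subgradients of `f` at `xb`:
pairs `(a,v)`, `a ≥ 0`, with `f x - f xb ≥ ⟪v, x - xb⟫ - a‖x‖² + a‖xb‖² - ε` for all `x`. -/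
def SubLscE {X : Type*} [NormedAddCommGroup X] [InnerProductSpace ℝ X] (f : X → EReal)
    (ε : ℝ) (xb : X) : Set (ℝ × X) :=
  {p | 0 ≤ p.1 ∧ ∀ x : X,
    f xb + ((⟪p.2, x - xb⟫ - p.1 * ‖x‖ ^ 2 + p.1 * ‖xb‖ ^ 2 - ε : ℝ) : EReal) ≤ f x}

/-- The set of local `Φ_lsc`-subgradients of `f` at `xb`. -/
def SubLscLoc {X : Type*} [NormedAddCommGroup X] [InnerProductSpace ℝ X] (f : X → EReal)
    (xb : X) : Set (ℝ × X) :=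
  {p | 0 ≤ p.1 ∧ ∃ δ : ℝ, 0 < δ ∧ ∀ x : X, ‖x - xb‖ < δ →
    f xb + ((⟪p.2, x - xb⟫ - p.1 * ‖x‖ ^ 2 + p.1 * ‖xb‖ ^ 2 : ℝ) : EReal) ≤ f x}

/-- `f` is paraconvex (with exponent 2). -/
def ParaconvexOn {X : Type*} [NormedAddCommGroup X] [InnerProductSpace ℝ X]
    (f : X → EReal) : Prop :=
  ∃ C : ℝ, 0 < C ∧ ∀ x y : X, ∀ t : ℝ, t ∈ Set.Icc (0 : ℝ) 1 →
    f (t • x + (1 - t) • y) ≤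
      (t : EReal) * f x + ((1 - t : ℝ) : EReal) * f y + ((C * ‖x - y‖ ^ 2 : ℝ) : EReal)

/-- The proximal subdifferential of `f` at `xb`. -/
def ProxSub {X : Type*} [NormedAddCommGroup X] [InnerProductSpace ℝ X] (f : X → EReal)
    (xb : X) : Set X :=
  {v | ∃ δ : ℝ, 0 < δ ∧ ∃ ρ : ℝ, 0 ≤ ρ ∧ ∀ x : X, ‖x - xb‖ < δ →
    f xb + ((⟪v, x - xb⟫ - ρ / 2 * ‖x - xb‖ ^ 2 : ℝ) : EReal) ≤ f x}

/-- The Dini subdifferential of `f` at `xb`. -/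
def DiniSub {X : Type*} [NormedAddCommGroup X] [InnerProductSpace ℝ X] (f : X → EReal)
    (xb : X) : Set X :=
  {w | ∀ h : X, ∀ t : ℕ → ℝ, ∀ u : ℕ → X, (∀ n, 0 < t n) →
    Filter.Tendsto t Filter.atTop (nhds 0) → Filter.Tendsto u Filter.atTop (nhds h) →
    ((⟪w, h⟫ : ℝ) : EReal) ≤
      Filter.liminf (fun n => (f (xb + t n • u n) - f xb) * (((t n)⁻¹ : ℝ) : EReal)) Filter.atTop}

/-- The `Φ_lsc`-subgradients of a real-valued `f` at `xb`. -/
def SubLscR {X : Type*} [NormedAddCommGroup X] [InnerProductSpace ℝ X] (f : X → ℝ)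
    (xb : X) : Set (ℝ × X) :=
  {p | 0 ≤ p.1 ∧ ∀ x : X,
    ⟪p.2, x - xb⟫ - p.1 * ‖x‖ ^ 2 + p.1 * ‖xb‖ ^ 2 ≤ f x - f xb}

private lemma convex_subLscE {X : Type*} [NormedAddCommGroup X] [InnerProductSpace ℝ X]
    (f : X → EReal) (ε : ℝ) (xb : X) : Convex ℝ (SubLscE f ε xb) := by
  rintro p ⟨hp0, hp⟩ q ⟨hq0, hq⟩ s t hs ht hst
  have h1 : (s • p + t • q).1 = s * p.1 + t * q.1 := rfl
  have h2 : (s • p + t • q).2 = s • p.2 + t • q.2 := rfl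
  constructor
  · rw [h1]; positivity
  · intro x
    set A := ⟪p.2, x - xb⟫ - p.1 * ‖x‖ ^ 2 + p.1 * ‖xb‖ ^ 2 - ε with hA
    set B := ⟪q.2, x - xb⟫ - q.1 * ‖x‖ ^ 2 + q.1 * ‖xb‖ ^ 2 - ε with hB
    have hexp : ⟪(s • p + t • q).2, x - xb⟫ - (s • p + t • q).1 * ‖x‖ ^ 2
        + (s • p + t • q).1 * ‖xb‖ ^ 2 - ε = s * A + t * B := by
      rw [h1, h2, inner_add_left, real_inner_smul_left, real_inner_smul_left, hA, hB]
      linear_combination ε * hst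
    rw [hexp]
    rcases le_total A B with hAB | hAB
    · have hle : s * A + t * B ≤ B := by
        have h3 := mul_le_mul_of_nonneg_left hAB hs
        have h4 : s * B + t * B = B := by linear_combination B * hst
        linarith
      calc f xb + ((s * A + t * B : ℝ) : EReal) ≤ f xb + ((B : ℝ) : EReal) := by
            exact add_le_add le_rfl (EReal.coe_le_coe_iff.2 hle)
        _ ≤ f x := hq x
    · have hle : s * A + t * B ≤ A := by
        have h3 := mul_le_mul_of_nonneg_left hAB ht
        have h4 : s * A + t * A = A := by linear_combination A * hst
        linarith
      calc f xb + ((s * A + t * B : ℝ) : EReal) ≤ f xb + ((A : ℝ) : EReal) := by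
            exact add_le_add le_rfl (EReal.coe_le_coe_iff.2 hle)
        _ ≤ f x := hp x

/-- the exact zero subgradient condition (`ε = 0`) at the level
`β = inf sup < +∞` is a sufficient condition for the minimax equality. -/
theorem stmt_17 {X : Type*} [NormedAddCommGroup X] [InnerProductSpace ℝ X] [CompleteSpace X]
    {Y : Type*} [NormedAddCommGroup Y] [InnerProductSpace ℝ Y] [CompleteSpace Y]
    (a : X × Y → EReal) (hbot : ∀ p, a p ≠ ⊥)
    (hconv : ∀ y : Y, PhiConvexOn (fun x => a (x, y)))
    (hsupp : ∀ y : Y, (PhiSupp (fun x => a (x, y))).Nonempty)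
    (hdom : ∀ y : Y, (PhiDom (fun x => a (x, y))).Nonempty)
    (hconc : ∀ x : X, ∀ y₁ y₂ : Y, ∀ t ∈ Set.Icc (0 : ℝ) 1,
      (t : EReal) * a (x, y₁) + ((1 - t : ℝ) : EReal) * a (x, y₂) ≤
        a (x, t • y₁ + (1 - t) • y₂))
    (hβ : (⨅ x : X, ⨆ y : Y, a (x, y)) < ⊤)
    (hzs : ∃ y₁ y₂ : Y, ∃ xb : X,
      xb ∈ PhiDom (fun x => a (x, y₁)) ∧ xb ∈ PhiDom (fun x => a (x, y₂)) ∧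
      (⨅ x : X, ⨆ y : Y, a (x, y)) ≤ a (xb, y₁) ∧
      (⨅ x : X, ⨆ y : Y, a (x, y)) ≤ a (xb, y₂) ∧
      ((0, 0) : ℝ × X) ∈ convexHull ℝ
        (SubLscE (fun x => a (x, y₁)) 0 xb ∪ SubLscE (fun x => a (x, y₂)) 0 xb)) :
    (⨆ y : Y, ⨅ x : X, a (x, y)) = ⨅ x : X, ⨆ y : Y, a (x, y) := by
  set β := ⨅ x : X, ⨆ y : Y, a (x, y) with hβdef
  refine le_antisymm (iSup_iInf_le_iInf_iSup fun y x => a (x, y)) ?_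
  obtain ⟨y₁, y₂, xb, hd1, hd2, hb1, hb2, hco⟩ := hzs
  -- It suffices to find y₀ with β ≤ a (x, y₀) for all x.
  suffices hkey : ∃ y0 : Y, ∀ x : X, β ≤ a (x, y0) by
    obtain ⟨y0, hy0⟩ := hkey
    calc β ≤ ⨅ x : X, a (x, y0) := le_iInf hy0
      _ ≤ ⨆ y : Y, ⨅ x : X, a (x, y) := le_iSup (fun y => ⨅ x : X, a (x, y)) y0
  set S₁ := SubLscE (fun x => a (x, y₁)) 0 xb with hS₁
  set S₂ := SubLscE (fun x => a (x, y₂)) 0 xb with hS₂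
  -- the degenerate case: (0,0) is itself a subgradient
  have single : ∀ y' : Y, β ≤ a (xb, y') →
      ((0, 0) : ℝ × X) ∈ SubLscE (fun x => a (x, y')) 0 xb → ∀ x, β ≤ a (x, y') := by
    intro y' hb hm x
    have h := hm.2 x
    simp only [inner_zero_left, zero_mul, sub_zero, zero_add, add_zero, zero_sub, neg_zero,
      sub_self, EReal.coe_zero] at h
    exact le_trans hb h
  -- the main case
  have keylem : ∀ (t : ℝ) (p q : ℝ × X), 0 ≤ t → t ≤ 1 → p ∈ S₁ → q ∈ S₂ →
      t • p + (1 - t) • q = (0, 0) → ∀ x, β ≤ a (x, t • y₁ + (1 - t) • y₂) := by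
    intro t p q ht0 ht1 hp hq hzero x
    have hne1t : a (xb, y₁) ≠ ⊤ := ne_of_lt hd1
    have hne2t : a (xb, y₂) ≠ ⊤ := ne_of_lt hd2
    set b₁ := (a (xb, y₁)).toReal with hb₁def
    set b₂ := (a (xb, y₂)).toReal with hb₂def
    have hc1 : a (xb, y₁) = (b₁ : EReal) := (EReal.coe_toReal hne1t (hbot _)).symm
    have hc2 : a (xb, y₂) = (b₂ : EReal) := (EReal.coe_toReal hne2t (hbot _)).symm
    set A := ⟪p.2, x - xb⟫ - p.1 * ‖x‖ ^ 2 + p.1 * ‖xb‖ ^ 2 - 0 with hAdef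
    set B := ⟪q.2, x - xb⟫ - q.1 * ‖x‖ ^ 2 + q.1 * ‖xb‖ ^ 2 - 0 with hBdef
    have h1 : ((b₁ + A : ℝ) : EReal) ≤ a (x, y₁) := by
      have h : a (xb, y₁) + ((A : ℝ) : EReal) ≤ a (x, y₁) := hp.2 x
      rw [hc1, ← EReal.coe_add] at h
      exact h
    have h2 : ((b₂ + B : ℝ) : EReal) ≤ a (x, y₂) := by
      have h : a (xb, y₂) + ((B : ℝ) : EReal) ≤ a (x, y₂) := hq.2 x
      rw [hc2, ← EReal.coe_add] at h
      exact h
    have hm1 : ((t * (b₁ + A) : ℝ) : EReal) ≤ (t : EReal) * a (x, y₁) := by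
      rw [EReal.coe_mul]
      exact mul_le_mul_of_nonneg_left h1 (by exact_mod_cast ht0)
    have hm2 : (((1 - t) * (b₂ + B) : ℝ) : EReal) ≤ ((1 - t : ℝ) : EReal) * a (x, y₂) := by
      rw [EReal.coe_mul]
      exact mul_le_mul_of_nonneg_left h2 (by exact_mod_cast (by linarith : (0:ℝ) ≤ 1 - t))
    have hsum : ((t * (b₁ + A) + (1 - t) * (b₂ + B) : ℝ) : EReal) ≤
        a (x, t • y₁ + (1 - t) • y₂) := by
      calc ((t * (b₁ + A) + (1 - t) * (b₂ + B) : ℝ) : EReal)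
          = ((t * (b₁ + A) : ℝ) : EReal) + (((1 - t) * (b₂ + B) : ℝ) : EReal) := by
            rw [← EReal.coe_add]
        _ ≤ (t : EReal) * a (x, y₁) + ((1 - t : ℝ) : EReal) * a (x, y₂) :=
            add_le_add hm1 hm2
        _ ≤ a (x, t • y₁ + (1 - t) • y₂) := hconc x y₁ y₂ t ⟨ht0, ht1⟩
    -- the combination collapses to t*b₁ + (1-t)*b₂
    have hv : t • p.2 + (1 - t) • q.2 = (0 : X) := congrArg Prod.snd hzero
    have ha0 : t * p.1 + (1 - t) * q.1 = 0 := congrArg Prod.fst hzero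
    have hinner : t * ⟪p.2, x - xb⟫ + (1 - t) * ⟪q.2, x - xb⟫ = 0 := by
      have : ⟪t • p.2 + (1 - t) • q.2, x - xb⟫ = (0 : ℝ) := by rw [hv]; simp
      rwa [inner_add_left, real_inner_smul_left, real_inner_smul_left] at this
    have hcollapse : t * (b₁ + A) + (1 - t) * (b₂ + B) = t * b₁ + (1 - t) * b₂ := by
      rw [hAdef, hBdef]
      linear_combination hinner + (‖xb‖ ^ 2 - ‖x‖ ^ 2) * ha0
    have hβb : β ≤ ((t * b₁ + (1 - t) * b₂ : ℝ) : EReal) := by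
      rcases le_total b₁ b₂ with hbb | hbb
      · refine le_trans (hc1 ▸ hb1) (EReal.coe_le_coe_iff.2 ?_)
        nlinarith
      · refine le_trans (hc2 ▸ hb2) (EReal.coe_le_coe_iff.2 ?_)
        nlinarith
    calc β ≤ ((t * b₁ + (1 - t) * b₂ : ℝ) : EReal) := hβb
      _ = ((t * (b₁ + A) + (1 - t) * (b₂ + B) : ℝ) : EReal) := by rw [hcollapse]
      _ ≤ a (x, t • y₁ + (1 - t) • y₂) := hsum
  rcases Set.eq_empty_or_nonempty S₁ with h1 | h1
  · rw [h1, Set.empty_union, (convex_subLscE _ _ _).convexHull_eq] at hco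
    exact ⟨y₂, single y₂ hb2 hco⟩
  rcases Set.eq_empty_or_nonempty S₂ with h2 | h2
  · rw [h2, Set.union_empty, (convex_subLscE _ _ _).convexHull_eq] at hco
    exact ⟨y₁, single y₁ hb1 hco⟩
  rw [(convex_subLscE _ _ _).convexHull_union (convex_subLscE _ _ _) h1 h2,
    mem_convexJoin] at hco
  obtain ⟨p, hp, q, hq, s, u, hs, hu, hsu, hseg⟩ := hco
  have hu' : u = 1 - s := by linarith
  refine ⟨s • y₁ + (1 - s) • y₂, keylem s p q hs (by linarith) hp hq ?_⟩
  rw [← hseg, hu']
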